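/- Let S be a finite group, Z a subgroup of the center of S such that the quotient S/Z is commutative, and ι : Z → ℂˣ an injective group homomorphism. Let L be a maximal abelian subgroup of S. Then Z ⊆ L, and for every group homomorphism χ : L → ℂˣ whose restriction to Z equals ι, the induced representation Ind_L^S(χ) (the ℂ[S]-module ℂ[S] ⊗_{ℂ[L]} ℂ_χ) is an irreducible representation of S. -/

import Mathlib

/-- The left ideal of `ℂ[S]` generated by the elements `l - χ(l)·1` for `l ∈ L`.
The quotient `ℂ[S] ⧸ indIdeal L χ` is the canonical model of the induced module
`ℂ[S] ⊗_{ℂ[L]} ℂ_χ`. -/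
noncomputable def indIdeal {S : Type*} [Group S] (L : Subgroup S) (χ : L →* ℂˣ) :
    Submodule (MonoidAlgebra ℂ S) (MonoidAlgebra ℂ S) :=
  Submodule.span (MonoidAlgebra ℂ S)
    {x : MonoidAlgebra ℂ S | ∃ l : L,
      x = MonoidAlgebra.of ℂ S (l : S) - (χ l : ℂ) • (1 : MonoidAlgebra ℂ S)}

open MonoidAlgebra Finset

namespace Stmt12

variable {S : Type*} [Group S] {L : Subgroup S}

lemma closure_comm {k : Set S} (h : ∀ x ∈ k, ∀ y ∈ k, x * y = y * x) :
    ∀ x ∈ Subgroup.closure k, ∀ y ∈ Subgroup.closure k, x * y = y * x := fun x hx y hy =>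
  congrArg Subtype.val ((Subgroup.closureCommGroupOfComm h).mul_comm ⟨x, hx⟩ ⟨y, hy⟩)

lemma char_sum_eq_zero {G : Type*} [Group G] [Fintype G] (g : G → ℂ)
    (hmul : ∀ a b, g (a * b) = g a * g b) (a : G) (ha : g a ≠ 1) :
    ∑ l, g l = 0 := by
  have h1 : g a * ∑ l, g l = ∑ l, g l := by
    rw [Finset.mul_sum]
    simp_rw [← hmul]
    exact Fintype.sum_bijective (a * ·) (Group.mulLeft_bijective a) _ _ fun x => rfl
  have h2 : (g a - 1) * ∑ l, g l = 0 := by rw [sub_mul, one_mul, h1, sub_self]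
  rcases mul_eq_zero.mp h2 with h | h
  · exact absurd (sub_eq_zero.mp h) ha
  · exact h

variable (χ : L →* ℂˣ)

lemma gen_mem (l : L) :
    single (l : S) (1 : ℂ) - (χ l : ℂ) • 1 ∈ indIdeal L χ :=
  Submodule.subset_span ⟨l, rfl⟩

lemma mk_single_mul (u : S) (l : L) (c : ℂ) :
    (Submodule.Quotient.mk (single (u * l) c) : MonoidAlgebra ℂ S ⧸ indIdeal L χ)
      = (χ l : ℂ) • Submodule.Quotient.mk (single u c) := by
  rw [← Submodule.Quotient.mk_smul, Submodule.Quotient.eq]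
  have h := (indIdeal L χ).smul_mem (single u c) (gen_mem χ l)
  simp only [smul_eq_mul, mul_sub, single_mul_single, mul_one, mul_smul_comm] at h
  exact h

lemma mk_single_of_mem {u : S} (h : u ∈ L) (c : ℂ) :
    (Submodule.Quotient.mk (single u c) : MonoidAlgebra ℂ S ⧸ indIdeal L χ)
      = (c * (χ ⟨u, h⟩ : ℂ)) • Submodule.Quotient.mk 1 := by
  have h1 := mk_single_mul χ 1 ⟨u, h⟩ c
  rw [one_mul] at h1
  have h2 : (single (1 : S) c : MonoidAlgebra ℂ S) = c • 1 := by
    rw [MonoidAlgebra.one_def, smul_single', mul_one]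
  rw [h1, h2, Submodule.Quotient.mk_smul, smul_smul, mul_comm]

section Dec

variable [DecidablePred (· ∈ L)]

/-- The extension of `χ` by zero to all of `S`. -/
noncomputable def fchi : S → ℂ :=
  fun s => if h : s ∈ L then (χ ⟨s, h⟩ : ℂ) else 0

lemma fchi_one : fchi χ 1 = 1 := by
  simp only [fchi, dif_pos L.one_mem]
  rw [show (⟨1, L.one_mem⟩ : L) = 1 from rfl, map_one, Units.val_one]

lemma fchi_of_mem {u : S} (h : u ∈ L) : fchi χ u = (χ ⟨u, h⟩ : ℂ) := dif_pos h

lemma fchi_of_not_mem {u : S} (h : u ∉ L) : fchi χ u = 0 := dif_neg h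

lemma fchi_mul_mem (u : S) (l : L) : fchi χ (u * l) = fchi χ u * (χ l : ℂ) := by
  by_cases h : u ∈ L
  · have h2 : u * l ∈ L := L.mul_mem h l.2
    rw [fchi_of_mem χ h, fchi_of_mem χ h2]
    have h3 : (⟨u * l, h2⟩ : L) = ⟨u, h⟩ * l := rfl
    rw [h3, map_mul, Units.val_mul]
  · have h2 : u * l ∉ L := fun hm => h (by simpa using L.mul_mem hm (L.inv_mem l.2))
    rw [fchi_of_not_mem χ h, fchi_of_not_mem χ h2, zero_mul]

variable [Fintype S]

/-- The `χ`-weighted "coefficient sum" functional. -/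
noncomputable def Lam (x : MonoidAlgebra ℂ S) : ℂ := ∑ s : S, x.coeff s * fchi χ s

lemma Lam_add (x y : MonoidAlgebra ℂ S) : Lam χ (x + y) = Lam χ x + Lam χ y := by
  unfold Lam
  rw [← Finset.sum_add_distrib]
  exact Finset.sum_congr rfl fun s _ => by rw [MonoidAlgebra.coeff_add, Finsupp.add_apply, add_mul]

lemma Lam_sub (x y : MonoidAlgebra ℂ S) : Lam χ (x - y) = Lam χ x - Lam χ y := by
  unfold Lam
  rw [← Finset.sum_sub_distrib]
  exact Finset.sum_congr rfl fun s _ => by rw [MonoidAlgebra.coeff_sub, Finsupp.sub_apply, sub_mul]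

lemma Lam_smul (c : ℂ) (x : MonoidAlgebra ℂ S) : Lam χ (c • x) = c * Lam χ x := by
  unfold Lam
  rw [Finset.mul_sum]
  exact Finset.sum_congr rfl fun s _ => by
    rw [MonoidAlgebra.coeff_smul, Finsupp.smul_apply, smul_eq_mul, mul_assoc]

lemma Lam_single (g : S) (c : ℂ) : Lam χ (single g c) = c * fchi χ g := by
  unfold Lam
  rw [Finset.sum_eq_single_of_mem g (Finset.mem_univ g)]
  · rw [MonoidAlgebra.coeff_single, Finsupp.single_eq_same]
  · intro b _ hb
    rw [MonoidAlgebra.coeff_single, Finsupp.single_eq_of_ne' (Ne.symm hb), zero_mul]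

lemma Lam_zero : Lam χ (0 : MonoidAlgebra ℂ S) = 0 := by
  unfold Lam
  exact Finset.sum_eq_zero fun s _ => by rw [MonoidAlgebra.coeff_zero, Finsupp.coe_zero, Pi.zero_apply, zero_mul]

/-- The functional `Lam` kills every left multiple of the ideal `indIdeal L χ`. -/
lemma lam_eq_zero_of_mem {x : MonoidAlgebra ℂ S} (hx : x ∈ indIdeal L χ) :
    ∀ r : MonoidAlgebra ℂ S, Lam χ (r * x) = 0 := by
  induction hx using Submodule.span_induction with
  | mem g hg =>
    obtain ⟨l, rfl⟩ := hg
    intro r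
    have e1 : r * (MonoidAlgebra.of ℂ S (l : S) - (χ l : ℂ) • 1)
        = r * single (l : S) 1 - (χ l : ℂ) • r := by
      rw [mul_sub, mul_smul_comm, mul_one, MonoidAlgebra.of_apply]
    have e2 : Lam χ (r * single (l : S) 1) = (χ l : ℂ) * Lam χ r := by
      unfold Lam
      rw [Finset.mul_sum]
      refine (Fintype.sum_bijective (· * (l : S)) (Group.mulRight_bijective _) _ _
        fun u => ?_).symm
      rw [MonoidAlgebra.coeff_mul_single_apply, mul_inv_cancel_right, mul_one, fchi_mul_mem]
      ring
    rw [e1, Lam_sub, e2, Lam_smul, sub_self]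
  | zero => intro r; rw [mul_zero, Lam_zero]
  | add y z _ _ hy hz =>
    intro r
    rw [mul_add, Lam_add, hy r, hz r, add_zero]
  | smul a y _ hy =>
    intro r
    rw [smul_eq_mul, ← mul_assoc]
    exact hy (r * a)

variable [Fintype L]

/-- The (unnormalized) projection onto the `χ`-eigenspace. -/
noncomputable def pp : MonoidAlgebra ℂ S :=
  ∑ l : L, (((χ l)⁻¹ : ℂˣ) : ℂ) • single (l : S) (1 : ℂ)

lemma mk_pp_single
    (hnorm : ∀ (u : S) (l : L), u⁻¹ * l * u ∈ L)
    (hfix : ∀ (u : S), u ∈ L → ∀ l : L, (⟨u⁻¹ * l * u, hnorm u l⟩ : L) = l)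
    (hsum0 : ∀ u : S, u ∉ L →
      ∑ l : L, (((χ l)⁻¹ : ℂˣ) : ℂ) * ((χ ⟨u⁻¹ * l * u, hnorm u l⟩ : ℂˣ) : ℂ) = 0)
    (u : S) (c : ℂ) :
    (Submodule.Quotient.mk (pp χ * single u c) : MonoidAlgebra ℂ S ⧸ indIdeal L χ)
      = Submodule.Quotient.mk (((Fintype.card L : ℂ) * (c * fchi χ u)) • 1) := by
  have e1 : pp χ * single u c
      = ∑ l : L, (((χ l)⁻¹ : ℂˣ) : ℂ) • single ((l : S) * u) c := by
    rw [pp, Finset.sum_mul]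
    exact Finset.sum_congr rfl fun l _ => by
      rw [smul_mul_assoc, single_mul_single, one_mul]
  have e2 : ∀ l : L, (Submodule.Quotient.mk (single ((l : S) * u) c)
      : MonoidAlgebra ℂ S ⧸ indIdeal L χ)
      = ((χ ⟨u⁻¹ * l * u, hnorm u l⟩ : ℂˣ) : ℂ) • Submodule.Quotient.mk (single u c) := by
    intro l
    have h3 : (l : S) * u = u * (⟨u⁻¹ * l * u, hnorm u l⟩ : L) := by group
    rw [h3, mk_single_mul]
  have e3 : (Submodule.Quotient.mk (pp χ * single u c)
      : MonoidAlgebra ℂ S ⧸ indIdeal L χ)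
      = (∑ l : L, (((χ l)⁻¹ : ℂˣ) : ℂ) * ((χ ⟨u⁻¹ * l * u, hnorm u l⟩ : ℂˣ) : ℂ))
        • Submodule.Quotient.mk (single u c) := by
    rw [e1, ← Submodule.mkQ_apply, map_sum, Finset.sum_smul]
    exact Finset.sum_congr rfl fun l _ => by
      rw [Submodule.mkQ_apply, Submodule.Quotient.mk_smul, e2 l, smul_smul]
  by_cases h : u ∈ L
  · have e4 : ∀ l : L, (((χ l)⁻¹ : ℂˣ) : ℂ) * ((χ ⟨u⁻¹ * l * u, hnorm u l⟩ : ℂˣ) : ℂ)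
        = 1 := by
      intro l
      rw [hfix u h l, ← Units.val_mul, inv_mul_cancel, Units.val_one]
    rw [e3, Finset.sum_congr rfl fun l _ => e4 l, Finset.sum_const, Finset.card_univ,
      nsmul_eq_mul, mul_one, mk_single_of_mem χ h, fchi_of_mem χ h, smul_smul,
      ← Submodule.Quotient.mk_smul]
  · rw [e3, hsum0 u h, zero_smul, fchi_of_not_mem χ h, mul_zero, mul_zero, zero_smul]
    exact ((Submodule.Quotient.mk_eq_zero _).mpr (Submodule.zero_mem _)).symm

lemma mk_pp_mul
    (hnorm : ∀ (u : S) (l : L), u⁻¹ * l * u ∈ L)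
    (hfix : ∀ (u : S), u ∈ L → ∀ l : L, (⟨u⁻¹ * l * u, hnorm u l⟩ : L) = l)
    (hsum0 : ∀ u : S, u ∉ L →
      ∑ l : L, (((χ l)⁻¹ : ℂˣ) : ℂ) * ((χ ⟨u⁻¹ * l * u, hnorm u l⟩ : ℂˣ) : ℂ) = 0)
    (x : MonoidAlgebra ℂ S) :
    (Submodule.Quotient.mk (pp χ * x) : MonoidAlgebra ℂ S ⧸ indIdeal L χ)
      = Submodule.Quotient.mk (((Fintype.card L : ℂ) * Lam χ x) • 1) := by
  induction x using MonoidAlgebra.induction_on with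
  | of g =>
    have := mk_pp_single χ hnorm hfix hsum0 g 1
    rw [MonoidAlgebra.of_apply, this, Lam_single, one_mul]
  | add f g hf hg =>
    rw [mul_add, Submodule.Quotient.mk_add, hf, hg, Lam_add, mul_add, add_smul,
      Submodule.Quotient.mk_add]
  | smul r f hf =>
    rw [mul_smul_comm, Submodule.Quotient.mk_smul, hf, ← Submodule.Quotient.mk_smul,
      Lam_smul, smul_smul]
    ring_nf

lemma mk_expand (x : MonoidAlgebra ℂ S) :
    (Submodule.Quotient.mk x : MonoidAlgebra ℂ S ⧸ indIdeal L χ)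
      = ∑ s : S, x.coeff s • Submodule.Quotient.mk (single s 1) := by
  induction x using MonoidAlgebra.induction_on with
  | of g =>
    rw [Finset.sum_eq_single_of_mem g (Finset.mem_univ g)]
    · rw [MonoidAlgebra.of_apply, MonoidAlgebra.coeff_single, Finsupp.single_eq_same, one_smul]
    · intro b _ hb
      rw [MonoidAlgebra.of_apply, MonoidAlgebra.coeff_single, Finsupp.single_eq_of_ne' (Ne.symm hb), zero_smul]
  | add f g hf hg =>
    rw [Submodule.Quotient.mk_add, hf, hg, ← Finset.sum_add_distrib]
    exact Finset.sum_congr rfl fun s _ => by rw [MonoidAlgebra.coeff_add, Finsupp.add_apply, add_smul]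
  | smul r f hf =>
    rw [Submodule.Quotient.mk_smul, hf, Finset.smul_sum]
    exact Finset.sum_congr rfl fun s _ => by
      rw [MonoidAlgebra.coeff_smul, Finsupp.smul_apply, smul_eq_mul, mul_smul]

variable [Fintype (S ⧸ L)]

lemma quot_mem (s : S) : ((QuotientGroup.mk s : S ⧸ L)).out⁻¹ * s ∈ L := by
  have h := QuotientGroup.out_eq' (QuotientGroup.mk s : S ⧸ L)
  exact (QuotientGroup.eq).mp h

lemma mk_eq_sum (x : MonoidAlgebra ℂ S) :
    (Submodule.Quotient.mk x : MonoidAlgebra ℂ S ⧸ indIdeal L χ)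
      = ∑ q : S ⧸ L,
        Lam χ (single (q.out)⁻¹ 1 * x) • Submodule.Quotient.mk (single q.out 1) := by
  classical
  have step1 : (Submodule.Quotient.mk x : MonoidAlgebra ℂ S ⧸ indIdeal L χ)
      = ∑ s : S, (x.coeff s * ((χ ⟨((QuotientGroup.mk s : S ⧸ L)).out⁻¹ * s, quot_mem s⟩ : ℂˣ) : ℂ))
          • Submodule.Quotient.mk (single ((QuotientGroup.mk s : S ⧸ L)).out 1) := by
    rw [mk_expand]
    refine Finset.sum_congr rfl fun s _ => ?_
    have h3 : s = ((QuotientGroup.mk s : S ⧸ L)).out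
        * (⟨((QuotientGroup.mk s : S ⧸ L)).out⁻¹ * s, quot_mem s⟩ : L) := by
      simp [mul_inv_cancel_left]
    have h4 : (Submodule.Quotient.mk (single s (1 : ℂ))
        : MonoidAlgebra ℂ S ⧸ indIdeal L χ)
        = ((χ ⟨((QuotientGroup.mk s : S ⧸ L)).out⁻¹ * s, quot_mem s⟩ : ℂˣ) : ℂ)
          • Submodule.Quotient.mk (single ((QuotientGroup.mk s : S ⧸ L)).out 1) := by
      conv_lhs => rw [h3]
      exact mk_single_mul χ _ _ 1
    rw [h4, smul_smul]
  rw [step1, ← Finset.sum_fiberwise univ (fun s => (QuotientGroup.mk s : S ⧸ L))]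
  refine Finset.sum_congr rfl fun q _ => ?_
  have key : ∀ s ∈ univ.filter (fun s => (QuotientGroup.mk s : S ⧸ L) = q),
      (x.coeff s * ((χ ⟨((QuotientGroup.mk s : S ⧸ L)).out⁻¹ * s, quot_mem s⟩ : ℂˣ) : ℂ))
          • (Submodule.Quotient.mk (single ((QuotientGroup.mk s : S ⧸ L)).out 1)
            : MonoidAlgebra ℂ S ⧸ indIdeal L χ)
        = (x.coeff s * fchi χ (q.out⁻¹ * s)) • Submodule.Quotient.mk (single q.out 1) := by
    intro s hs
    have hs' := (Finset.mem_filter.mp hs).2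
    subst hs'
    rw [fchi_of_mem χ (quot_mem s)]
  rw [Finset.sum_congr rfl key, Finset.sum_filter_of_ne ?side, ← Finset.sum_smul]
  case side =>
    intro s _ hne
    by_contra hq
    apply hne
    have hnm : (q.out)⁻¹ * s ∉ L := by
      intro hmem
      apply hq
      rw [show s = q.out * ((q.out)⁻¹ * s) by group,
        QuotientGroup.mk_mul_of_mem _ hmem, QuotientGroup.out_eq']
    rw [fchi_of_not_mem χ hnm, mul_zero, zero_smul]
  congr 1
  unfold Lam
  refine (Fintype.sum_bijective (fun s => q.out * s) (Group.mulLeft_bijective _) _ _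
    fun s => ?_).symm
  rw [MonoidAlgebra.coeff_single_mul_apply, inv_inv, one_mul, inv_mul_cancel_left]

end Dec

end Stmt12

theorem stmt_12 (S : Type*) [Group S] [Finite S] (Z : Subgroup S)
    (hZ : Z ≤ Subgroup.center S)
    (hcomm : ∀ a b : S, a * b * a⁻¹ * b⁻¹ ∈ Z)
    (ι : Z →* ℂˣ) (hι : Function.Injective ι)
    (L : Subgroup S)
    (hLcomm : ∀ x ∈ L, ∀ y ∈ L, x * y = y * x)
    (hLmax : ∀ L' : Subgroup S, (∀ x ∈ L', ∀ y ∈ L', x * y = y * x) → L ≤ L' → L' = L) :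
    Z ≤ L ∧
    ∀ χ : L →* ℂˣ,
      (∀ (z : S) (hz : z ∈ Z) (hz' : z ∈ L), χ ⟨z, hz'⟩ = ι ⟨z, hz⟩) →
      IsSimpleModule (MonoidAlgebra ℂ S) (MonoidAlgebra ℂ S ⧸ indIdeal L χ) := by
  classical
  -- Step 1: Z ≤ L
  have hZL : Z ≤ L := by
    have hc : ∀ x ∈ (L : Set S) ∪ (Z : Set S), ∀ y ∈ (L : Set S) ∪ (Z : Set S),
        x * y = y * x := by
      rintro x (hx | hx) y (hy | hy)
      · exact hLcomm x hx y hy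
      · exact Subgroup.mem_center_iff.mp (hZ hy) x
      · exact (Subgroup.mem_center_iff.mp (hZ hx) y).symm
      · exact Subgroup.mem_center_iff.mp (hZ hy) x
    have hle : L ≤ Subgroup.closure ((L : Set S) ∪ (Z : Set S)) :=
      fun a ha => Subgroup.subset_closure (Or.inl ha)
    have heq := hLmax _ (Stmt12.closure_comm hc) hle
    intro z hz
    rw [← heq]
    exact Subgroup.subset_closure (Or.inr hz)
  refine ⟨hZL, fun χ hχ => ?_⟩
  -- centralizer of L is L
  have hcent : ∀ u : S, (∀ l ∈ L, u * l = l * u) → u ∈ L := by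
    intro u hu
    have hc : ∀ x ∈ (L : Set S) ∪ {u}, ∀ y ∈ (L : Set S) ∪ {u}, x * y = y * x := by
      rintro x (hx | hx) y (hy | hy)
      · exact hLcomm x hx y hy
      · rw [Set.mem_singleton_iff] at hy; subst hy; exact (hu x hx).symm
      · rw [Set.mem_singleton_iff] at hx; subst hx; exact hu y hy
      · rw [Set.mem_singleton_iff] at hx hy; subst hx; subst hy; rfl
    have hle : L ≤ Subgroup.closure ((L : Set S) ∪ {u}) :=
      fun a ha => Subgroup.subset_closure (Or.inl ha)
    have heq := hLmax _ (Stmt12.closure_comm hc) hle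
    rw [← heq]
    exact Subgroup.subset_closure (Or.inr rfl)
  -- L is normal
  have hnorm : ∀ (u : S) (l : L), u⁻¹ * l * u ∈ L := by
    intro u l
    have hz := hcomm u⁻¹ l
    rw [inv_inv] at hz
    have h1 : u⁻¹ * l * u = (u⁻¹ * l * u * (l : S)⁻¹) * l := by group
    rw [h1]
    exact L.mul_mem (hZL hz) l.2
  have hfix : ∀ (u : S), u ∈ L → ∀ l : L, (⟨u⁻¹ * l * u, hnorm u l⟩ : L) = l := by
    intro u hu l
    refine Subtype.ext ?_
    show u⁻¹ * l * u = l
    rw [mul_assoc, ← hLcomm u hu l l.2, ← mul_assoc, inv_mul_cancel, one_mul]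
  haveI : Fintype S := Fintype.ofFinite S
  haveI : Fintype L := Fintype.ofFinite L
  haveI : Fintype (S ⧸ L) := Fintype.ofFinite _
  -- the character sum vanishes off L
  have hsum0 : ∀ u : S, u ∉ L →
      ∑ l : L, (((χ l)⁻¹ : ℂˣ) : ℂ) * ((χ ⟨u⁻¹ * l * u, hnorm u l⟩ : ℂˣ) : ℂ) = 0 := by
    intro u hu
    set g : L → ℂ := fun l =>
      (((χ l)⁻¹ : ℂˣ) : ℂ) * ((χ ⟨u⁻¹ * l * u, hnorm u l⟩ : ℂˣ) : ℂ) with hg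
    have hmul : ∀ a b : L, g (a * b) = g a * g b := by
      intro a b
      have h1 : (⟨u⁻¹ * (a * b : L) * u, hnorm u (a * b)⟩ : L)
          = ⟨u⁻¹ * a * u, hnorm u a⟩ * ⟨u⁻¹ * b * u, hnorm u b⟩ := by
        refine Subtype.ext ?_
        show u⁻¹ * (a * b : S) * u = (u⁻¹ * a * u) * (u⁻¹ * b * u)
        group
      simp only [hg, h1, map_mul, mul_inv, Units.val_mul]
      ring
    -- find a noncommuting element of L
    have hex : ∃ l ∈ L, u * l ≠ l * u := by
      by_contra hall
      push_neg at hall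
      exact hu (hcent u hall)
    obtain ⟨l, hl, hlu⟩ := hex
    refine Stmt12.char_sum_eq_zero g hmul ⟨l, hl⟩ ?_
    -- compute g ⟨l, hl⟩
    have hzZ : l⁻¹ * u⁻¹ * l * u ∈ Z := by
      have := hcomm l⁻¹ u⁻¹
      rwa [inv_inv, inv_inv] at this
    have hz1 : l⁻¹ * u⁻¹ * l * u ≠ 1 := by
      intro h1
      apply hlu
      have h2 : u⁻¹ * l * u = l := by
        have h2' := congrArg (fun w => l * w) h1
        simpa [mul_assoc] using h2'
      have h3 := congrArg (fun w => u * w) h2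
      have h4 : l * u = u * l := by simpa [mul_assoc] using h3
      exact h4.symm
    have hsplit : (⟨u⁻¹ * (⟨l, hl⟩ : L) * u, hnorm u ⟨l, hl⟩⟩ : L)
        = ⟨l, hl⟩ * ⟨l⁻¹ * u⁻¹ * l * u, hZL hzZ⟩ := by
      refine Subtype.ext ?_
      show u⁻¹ * l * u = l * (l⁻¹ * u⁻¹ * l * u)
      group
    rw [hg]
    simp only [hsplit, map_mul]
    rw [hχ (l⁻¹ * u⁻¹ * l * u) hzZ (hZL hzZ)]
    rw [Units.val_mul, ← mul_assoc, ← Units.val_mul, inv_mul_cancel, Units.val_one, one_mul]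
    intro hone
    have : ι ⟨l⁻¹ * u⁻¹ * l * u, hzZ⟩ = 1 := Units.ext hone
    have h2 : (⟨l⁻¹ * u⁻¹ * l * u, hzZ⟩ : Z) = 1 := hι (by rw [this, map_one])
    exact hz1 (congrArg Subtype.val h2)
  -- Nontriviality
  have hone : (Submodule.Quotient.mk 1 : MonoidAlgebra ℂ S ⧸ indIdeal L χ) ≠ 0 := by
    intro h
    rw [Submodule.Quotient.mk_eq_zero] at h
    have h1 := Stmt12.lam_eq_zero_of_mem χ h 1
    rw [one_mul] at h1
    have h2 : Stmt12.Lam χ (1 : MonoidAlgebra ℂ S) = 1 := by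
      rw [MonoidAlgebra.one_def, Stmt12.Lam_single, Stmt12.fchi_one, mul_one]
    rw [h2] at h1
    exact one_ne_zero h1
  haveI : Nontrivial (MonoidAlgebra ℂ S ⧸ indIdeal L χ) :=
    ⟨Submodule.Quotient.mk 1, 0, hone⟩
  refine { toNontrivial := inferInstance, eq_bot_or_eq_top := fun N => ?_ }
  by_cases hN : N = ⊥
  · exact Or.inl hN
  · refine Or.inr ?_
    obtain ⟨v, hvN, hv0⟩ := (Submodule.ne_bot_iff N).mp hN
    obtain ⟨x, rfl⟩ := Submodule.Quotient.mk_surjective _ v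
    have hex : ∃ t : S, Stmt12.Lam χ (MonoidAlgebra.single t⁻¹ 1 * x) ≠ 0 := by
      by_contra hall
      push_neg at hall
      apply hv0
      rw [Stmt12.mk_eq_sum χ x]
      exact Finset.sum_eq_zero fun q _ => by rw [hall, zero_smul]
    obtain ⟨t, ht⟩ := hex
    set c : ℂ := (Fintype.card L : ℂ) * Stmt12.Lam χ (MonoidAlgebra.single t⁻¹ 1 * x) with hc
    have hc0 : c ≠ 0 := by
      refine mul_ne_zero ?_ ht
      exact_mod_cast Fintype.card_ne_zero
    have key : (Stmt12.pp χ * MonoidAlgebra.single t⁻¹ 1)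
          • (Submodule.Quotient.mk x : MonoidAlgebra ℂ S ⧸ indIdeal L χ)
        = Submodule.Quotient.mk (c • 1) := by
      rw [← Submodule.Quotient.mk_smul, smul_eq_mul, mul_assoc]
      exact Stmt12.mk_pp_mul χ hnorm hfix hsum0 (MonoidAlgebra.single t⁻¹ 1 * x)
    have hmem : (Submodule.Quotient.mk (c • 1) : MonoidAlgebra ℂ S ⧸ indIdeal L χ) ∈ N := by
      rw [← key]
      exact N.smul_mem _ hvN
    have hone_mem : (Submodule.Quotient.mk 1 : MonoidAlgebra ℂ S ⧸ indIdeal L χ) ∈ N := by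
      have h2 := N.smul_mem (algebraMap ℂ (MonoidAlgebra ℂ S) c⁻¹) hmem
      have h3 : (algebraMap ℂ (MonoidAlgebra ℂ S) c⁻¹)
            • (Submodule.Quotient.mk (c • 1) : MonoidAlgebra ℂ S ⧸ indIdeal L χ)
          = Submodule.Quotient.mk 1 := by
        rw [← Submodule.Quotient.mk_smul, smul_eq_mul, ← Algebra.smul_def, smul_smul,
          inv_mul_cancel₀ hc0, one_smul]
      rwa [h3] at h2
    rw [eq_top_iff]
    intro w _
    obtain ⟨r, rfl⟩ := Submodule.Quotient.mk_surjective _ w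
    have : (Submodule.Quotient.mk r : MonoidAlgebra ℂ S ⧸ indIdeal L χ)
        = r • Submodule.Quotient.mk 1 := by
      rw [← Submodule.Quotient.mk_smul, smul_eq_mul, mul_one]
    rw [this]
    exact N.smul_mem r hone_mem
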